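/- Let c ∈ ℝ with c + 1 > 0. There exists C ≥ 1 such that for all z₀ = (x₀, y₀) with y₀ ≥ 0 and all 0 < r ≤ s, V(z₀, s)/V(z₀, r) ≤ C (s/r)^{N+1+c⁺}, where c⁺ = max(c, 0). In particular the measure μ = y^c dx dy is doubling on cylindrical balls. -/

import Mathlib

open MeasureTheory Set

/-- `V (z₀, r) = ω_N r^N ∫_{max(y₀-r,0)}^{y₀+r} y^c dy`, the μ-measure
(`dμ = y^c dx dy`) of the cylindrical ball `Q(z₀,r)`. -/
noncomputable def V (N : ℕ) (c y₀ r : ℝ) : ℝ :=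
  (volume (Metric.ball (0 : EuclideanSpace ℝ (Fin N)) 1)).toReal * r ^ N *
    ∫ y in Ioo (max (y₀ - r) 0) (y₀ + r), y ^ c

/-- Tangent-line inequality for concave rpow (`0 ≤ p ≤ 1`). -/
private lemma tangent_le {a b p : ℝ} (ha : 0 ≤ a) (hb : 0 < b) (hp0 : 0 ≤ p) (hp1 : p ≤ 1) :
    a ^ p ≤ b ^ p + p * b ^ (p - 1) * (a - b) := by
  have hs : (-1 : ℝ) ≤ a / b - 1 := by
    have : 0 ≤ a / b := div_nonneg ha hb.le
    linarith
  have h := rpow_one_add_le_one_add_mul_self hs hp0 hp1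
  rw [show (1 : ℝ) + (a / b - 1) = a / b by ring, Real.div_rpow ha hb.le] at h
  have hbp : 0 < b ^ p := Real.rpow_pos_of_pos hb p
  have h3 : a ^ p ≤ (1 + p * (a / b - 1)) * b ^ p := by
    calc a ^ p = a ^ p / b ^ p * b ^ p := by field_simp
    _ ≤ (1 + p * (a / b - 1)) * b ^ p := mul_le_mul_of_nonneg_right h hbp.le
  have h4 : (1 + p * (a / b - 1)) * b ^ p = b ^ p + p * b ^ (p - 1) * (a - b) := by
    rw [Real.rpow_sub_one hb.ne' p]
    field_simp
  linarith [h4 ▸ h3]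

/-- Tangent-line inequality for convex rpow (`1 ≤ p`). -/
private lemma tangent_ge {a b p : ℝ} (ha : 0 ≤ a) (hb : 0 < b) (hp : 1 ≤ p) :
    b ^ p + p * b ^ (p - 1) * (a - b) ≤ a ^ p := by
  have hs : (-1 : ℝ) ≤ a / b - 1 := by
    have : 0 ≤ a / b := div_nonneg ha hb.le
    linarith
  have h := one_add_mul_self_le_rpow_one_add hs hp
  rw [show (1 : ℝ) + (a / b - 1) = a / b by ring, Real.div_rpow ha hb.le] at h
  have hbp : 0 < b ^ p := Real.rpow_pos_of_pos hb p
  have h3 : (1 + p * (a / b - 1)) * b ^ p ≤ a ^ p := by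
    calc (1 + p * (a / b - 1)) * b ^ p ≤ a ^ p / b ^ p * b ^ p :=
          mul_le_mul_of_nonneg_right h hbp.le
    _ = a ^ p := by field_simp
  have h4 : (1 + p * (a / b - 1)) * b ^ p = b ^ p + p * b ^ (p - 1) * (a - b) := by
    rw [Real.rpow_sub_one hb.ne' p]
    field_simp
  linarith [h4 ▸ h3]

private lemma lower_bd {c y₀ t : ℝ} (hc : 0 < c + 1) (hy : 0 ≤ y₀) (ht : 0 < t) :
    min (c + 1) 1 * (t * (y₀ + t) ^ c) ≤ (y₀ + t) ^ (c + 1) - max (y₀ - t) 0 ^ (c + 1) := by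
  set a := max (y₀ - t) 0 with ha_def
  set b := y₀ + t with hb_def
  have hb : 0 < b := by positivity
  have ha0 : 0 ≤ a := le_max_right _ _
  have hab : a ≤ b := max_le (by linarith) hb.le
  have hba : t ≤ b - a := by
    rcases le_total (y₀ - t) 0 with h | h
    · rw [ha_def, max_eq_right h]; simp only [sub_zero, hb_def]; linarith
    · rw [ha_def, max_eq_left h]; simp only [hb_def]; linarith
  have hbc : (0 : ℝ) < b ^ c := Real.rpow_pos_of_pos hb c
  rcases le_or_gt 1 (c + 1) with h1 | h1
  · -- c ≥ 0
    rw [min_eq_right h1]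
    have hc0 : 0 ≤ c := by linarith
    have hbp : b ^ (c + 1) = b ^ c * b := Real.rpow_add_one hb.ne' c
    have hap : a ^ (c + 1) ≤ b ^ c * a := by
      rcases eq_or_lt_of_le ha0 with h0 | h0
      · rw [← h0, Real.zero_rpow hc.ne']; simp
      · rw [Real.rpow_add_one h0.ne' c]
        exact mul_le_mul_of_nonneg_right (Real.rpow_le_rpow ha0 hab hc0) ha0
    nlinarith
  · -- c < 0
    rw [min_eq_left h1.le]
    have h := tangent_le ha0 hb hc.le h1.le
    rw [show c + 1 - 1 = c by ring] at h
    have hx : (c + 1) * b ^ c * t ≤ (c + 1) * b ^ c * (b - a) :=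
      mul_le_mul_of_nonneg_left hba (by positivity)
    nlinarith

private lemma upper_bd {c y₀ t : ℝ} (hc : 0 < c + 1) (hy : 0 ≤ y₀) (ht : 0 < t) :
    (y₀ + t) ^ (c + 1) - max (y₀ - t) 0 ^ (c + 1) ≤ (2 * (c + 1) + 6) * (t * (y₀ + t) ^ c) := by
  set a := max (y₀ - t) 0 with ha_def
  set b := y₀ + t with hb_def
  have hb : 0 < b := by positivity
  have ha0 : 0 ≤ a := le_max_right _ _
  have hab : a ≤ b := max_le (by linarith) hb.le
  have hba : b - a ≤ 2 * t := by
    have : y₀ - t ≤ a := le_max_left _ _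
    simp only [hb_def]; linarith
  have hbc : (0 : ℝ) < b ^ c := Real.rpow_pos_of_pos hb c
  rcases le_or_gt 1 (c + 1) with h1 | h1
  · -- c ≥ 0
    have h := tangent_ge ha0 hb h1
    rw [show c + 1 - 1 = c by ring] at h
    have hx : (c + 1) * b ^ c * (b - a) ≤ (c + 1) * b ^ c * (2 * t) :=
      mul_le_mul_of_nonneg_left hba (by positivity)
    nlinarith [mul_pos ht hbc]
  · -- c < 0
    rcases le_or_gt y₀ (2 * t) with hy2 | hy2
    · -- y₀ ≤ 2t : drop a and use b ≤ 3t
      have hap : (0 : ℝ) ≤ a ^ (c + 1) := Real.rpow_nonneg ha0 _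
      have hbp : b ^ (c + 1) = b ^ c * b := Real.rpow_add_one hb.ne' c
      have hb3 : b ≤ 3 * t := by simp only [hb_def]; linarith
      have hx : b ^ c * b ≤ b ^ c * (3 * t) := mul_le_mul_of_nonneg_left hb3 hbc.le
      nlinarith [mul_pos ht hbc]
    · -- y₀ > 2t
      have hat : t ≤ y₀ - t := by linarith
      have ha_eq : a = y₀ - t := max_eq_left (by linarith)
      have ha : 0 < a := by rw [ha_eq]; linarith
      have h := tangent_le hb.le ha hc.le h1.le
      rw [show c + 1 - 1 = c by ring] at h
      -- h : b^(c+1) ≤ a^(c+1) + (c+1)*a^c*(b-a)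
      have hac : a ^ c ≤ 3 * b ^ c := by
        have h3a : b / 3 ≤ a := by rw [ha_eq]; simp only [hb_def]; linarith
        have h3 : a ^ c ≤ (b / 3) ^ c :=
          Real.rpow_le_rpow_of_nonpos (by positivity) h3a (by linarith)
        have h4 : (b / 3) ^ c = b ^ c / (3 : ℝ) ^ c :=
          Real.div_rpow hb.le (by norm_num : (0:ℝ) ≤ 3) c
        have h5 : (1 : ℝ) / 3 ≤ (3 : ℝ) ^ c := by
          have : ((3 : ℝ)) ^ (-1 : ℝ) ≤ (3 : ℝ) ^ c :=
            Real.rpow_le_rpow_of_exponent_le (by norm_num) (by linarith)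
          rwa [Real.rpow_neg_one, show ((3:ℝ))⁻¹ = 1/3 by norm_num] at this
        have h6 : (0 : ℝ) < (3 : ℝ) ^ c := Real.rpow_pos_of_pos (by norm_num) c
        rw [h4] at h3
        calc a ^ c ≤ b ^ c / (3 : ℝ) ^ c := h3
        _ ≤ 3 * b ^ c := by
            rw [div_le_iff₀ h6]
            nlinarith [mul_le_mul_of_nonneg_left h5 (by positivity : (0:ℝ) ≤ 3 * b ^ c)]
      have hac0 : (0 : ℝ) < a ^ c := Real.rpow_pos_of_pos ha c
      have hba2 : b - a = 2 * t := by rw [ha_eq]; simp only [hb_def]; ring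
      rw [hba2] at h
      have hx : (c + 1) * (2 * t) * a ^ c ≤ (c + 1) * (2 * t) * (3 * b ^ c) :=
        mul_le_mul_of_nonneg_left hac (by positivity)
      nlinarith [mul_pos ht hbc]

private lemma mid_bd {c y₀ r s : ℝ} (hy : 0 ≤ y₀) (hr : 0 < r) (hrs : r ≤ s) :
    (y₀ + s) ^ c ≤ (s / r) ^ max c 0 * (y₀ + r) ^ c := by
  have hs : 0 < s := hr.trans_le hrs
  have hq : (1 : ℝ) ≤ s / r := (one_le_div hr).mpr hrs
  rcases le_or_gt 0 c with h0 | h0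
  · rw [max_eq_left h0]
    have h1 : y₀ + s ≤ (s / r) * (y₀ + r) := by
      have : (s / r) * r = s := div_mul_cancel₀ s hr.ne'
      nlinarith
    calc (y₀ + s) ^ c ≤ ((s / r) * (y₀ + r)) ^ c :=
          Real.rpow_le_rpow (by positivity) h1 h0
    _ = (s / r) ^ c * (y₀ + r) ^ c := Real.mul_rpow (by positivity) (by positivity)
  · rw [max_eq_right h0.le, Real.rpow_zero, one_mul]
    exact Real.rpow_le_rpow_of_nonpos (by positivity) (by linarith) h0.le

private lemma key_bd {c : ℝ} (hc : 0 < c + 1) :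
    ∃ C : ℝ, 1 ≤ C ∧ ∀ y₀ r s : ℝ, 0 ≤ y₀ → 0 < r → r ≤ s →
      (y₀ + s) ^ (c + 1) - max (y₀ - s) 0 ^ (c + 1) ≤
        C * (s / r) ^ (1 + max c 0) *
          ((y₀ + r) ^ (c + 1) - max (y₀ - r) 0 ^ (c + 1)) := by
  have hK1 : (0 : ℝ) < min (c + 1) 1 := lt_min hc one_pos
  have hK2 : (0 : ℝ) < 2 * (c + 1) + 6 := by linarith
  refine ⟨(2 * (c + 1) + 6) / min (c + 1) 1, ?_, ?_⟩
  · rw [le_div_iff₀ hK1]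
    have := min_le_right (c + 1) 1
    linarith
  intro y₀ r s hy hr hrs
  have hs : 0 < s := hr.trans_le hrs
  have hq : (0 : ℝ) < s / r := div_pos hs hr
  have hA := upper_bd hc hy hs
  have hB := lower_bd hc hy hr
  have hM := mid_bd (c := c) hy hr hrs
  set m := max c 0 with hm_def
  set K₁ := min (c + 1) 1 with hK₁_def
  set K₂ := 2 * (c + 1) + 6 with hK₂_def
  have hmul : s * (y₀ + s) ^ c ≤ s * ((s / r) ^ m * (y₀ + r) ^ c) :=
    mul_le_mul_of_nonneg_left hM hs.le
  have hA2 : (y₀ + s) ^ (c + 1) - max (y₀ - s) 0 ^ (c + 1) ≤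
      K₂ * (s * ((s / r) ^ m * (y₀ + r) ^ c)) := by
    calc (y₀ + s) ^ (c + 1) - max (y₀ - s) 0 ^ (c + 1) ≤ K₂ * (s * (y₀ + s) ^ c) := hA
    _ ≤ K₂ * (s * ((s / r) ^ m * (y₀ + r) ^ c)) := mul_le_mul_of_nonneg_left hmul hK2.le
  rw [div_mul_eq_mul_div, div_mul_eq_mul_div, le_div_iff₀ hK1]
  have hpow : (s / r) ^ (1 + m) = (s / r) * (s / r) ^ m := by
    rw [Real.rpow_add hq, Real.rpow_one]
  have hqr : (s / r) * r = s := div_mul_cancel₀ s hr.ne'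
  have e1 : K₂ * ((s / r) * (s / r) ^ m) * (K₁ * (r * (y₀ + r) ^ c)) ≤
      K₂ * ((s / r) * (s / r) ^ m) * ((y₀ + r) ^ (c + 1) - max (y₀ - r) 0 ^ (c + 1)) := by
    apply mul_le_mul_of_nonneg_left hB
    have : (0 : ℝ) ≤ (s / r) ^ m := Real.rpow_nonneg hq.le m
    positivity
  have e2 : K₂ * ((s / r) * (s / r) ^ m) * (K₁ * (r * (y₀ + r) ^ c)) =
      (K₂ * (s * ((s / r) ^ m * (y₀ + r) ^ c))) * K₁ := by
    rw [show K₂ * ((s / r) * (s / r) ^ m) * (K₁ * (r * (y₀ + r) ^ c)) =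
      K₂ * ((s / r) * r) * ((s / r) ^ m * (y₀ + r) ^ c) * K₁ by ring, hqr]
    ring
  have e3 : ((y₀ + s) ^ (c + 1) - max (y₀ - s) 0 ^ (c + 1)) * K₁ ≤
      (K₂ * (s * ((s / r) ^ m * (y₀ + r) ^ c))) * K₁ :=
    mul_le_mul_of_nonneg_right hA2 hK1.le
  rw [hpow]
  linarith

private lemma int_eval {c : ℝ} (hc : -1 < c) {a b : ℝ} (hab : a ≤ b) :
    ∫ y in Ioo a b, y ^ c = (b ^ (c + 1) - a ^ (c + 1)) / (c + 1) := by
  rw [← integral_Ioc_eq_integral_Ioo, ← intervalIntegral.integral_of_le hab,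
    integral_rpow (Or.inl hc)]

/-- Lemma 2.5, doubling condition: there is `C ≥ 1` with
`V(z₀,s)/V(z₀,r) ≤ C (s/r)^{N+1+c⁺}` for all `0 < r ≤ s` and `y₀ ≥ 0`. -/
theorem stmt_3 (N : ℕ) (c : ℝ) (hc : c + 1 > 0) :
    ∃ C : ℝ, 1 ≤ C ∧ ∀ y₀ r s : ℝ, 0 ≤ y₀ → 0 < r → r ≤ s →
      V N c y₀ s / V N c y₀ r ≤ C * (s / r) ^ ((N : ℝ) + 1 + max c 0) := by
  obtain ⟨C, hC1, hkey⟩ := key_bd hc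
  refine ⟨C, hC1, ?_⟩
  intro y₀ r s hy hr hrs
  have hs : 0 < s := hr.trans_le hrs
  have hc' : (-1 : ℝ) < c := by linarith
  set ω := (volume (Metric.ball (0 : EuclideanSpace ℝ (Fin N)) 1)).toReal with hω_def
  have hω : 0 < ω :=
    ENNReal.toReal_pos (Metric.measure_ball_pos _ _ one_pos).ne' measure_ball_lt_top.ne
  have habr : max (y₀ - r) 0 ≤ y₀ + r := max_le (by linarith) (by linarith)
  have habs : max (y₀ - s) 0 ≤ y₀ + s := max_le (by linarith) (by linarith)
  have hVr : V N c y₀ r =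
      ω * r ^ N * (((y₀ + r) ^ (c + 1) - max (y₀ - r) 0 ^ (c + 1)) / (c + 1)) := by
    rw [V, int_eval hc' habr]
  have hVs : V N c y₀ s =
      ω * s ^ N * (((y₀ + s) ^ (c + 1) - max (y₀ - s) 0 ^ (c + 1)) / (c + 1)) := by
    rw [V, int_eval hc' habs]
  have hfr : 0 < (y₀ + r) ^ (c + 1) - max (y₀ - r) 0 ^ (c + 1) := by
    have hmax : max (y₀ - r) 0 < y₀ + r := max_lt (by linarith) (by linarith)
    have := Real.rpow_lt_rpow (le_max_right (y₀ - r) 0) hmax hc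
    linarith
  have hVrpos : 0 < V N c y₀ r := by
    rw [hVr]; positivity
  rw [div_le_iff₀ hVrpos]
  have hq : (0 : ℝ) < s / r := div_pos hs hr
  have hpow : (s / r) ^ ((N : ℝ) + 1 + max c 0) = (s / r) ^ N * (s / r) ^ (1 + max c 0) := by
    rw [add_assoc, Real.rpow_add hq, Real.rpow_natCast]
  have hsN : (s / r) ^ N * r ^ N = s ^ N := by
    rw [← mul_pow, div_mul_cancel₀ s hr.ne']
  have hk := hkey y₀ r s hy hr hrs
  calc V N c y₀ s
      = (ω * s ^ N / (c + 1)) * ((y₀ + s) ^ (c + 1) - max (y₀ - s) 0 ^ (c + 1)) := by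
        rw [hVs]; ring
    _ ≤ (ω * s ^ N / (c + 1)) * (C * (s / r) ^ (1 + max c 0) *
          ((y₀ + r) ^ (c + 1) - max (y₀ - r) 0 ^ (c + 1))) := by
        apply mul_le_mul_of_nonneg_left hk
        positivity
    _ = C * (s / r) ^ ((N : ℝ) + 1 + max c 0) * V N c y₀ r := by
        rw [hVr, hpow, ← hsN]; ring
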